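/- Let G be a co-interval graph and let x, y be two distinct non-adjacent vertices of G. Then the graph obtained from G by identifying x and y is a co-interval graph. -/

import Mathlib

/-- A graph is an interval graph if its vertices can be assigned nonempty closed
intervals of `ℝ` so that distinct vertices are adjacent iff their intervals meet. -/
def IsIntervalGraph {V : Type*} (G : SimpleGraph V) : Prop :=
  ∃ I : V → Set ℝ,
    (∀ v, ∃ a b : ℝ, a ≤ b ∧ I v = Set.Icc a b) ∧
    ∀ u v : V, u ≠ v → (G.Adj u v ↔ (I u ∩ I v).Nonempty)

/-- A co-interval graph is the complement of an interval graph. -/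
def IsCoIntervalGraph {V : Type*} (G : SimpleGraph V) : Prop :=
  IsIntervalGraph Gᶜ

/-- The graph obtained from `G` by identifying the vertex `y` with the vertex `x`:
its vertex set is `V(G) \ {y}`; two vertices distinct from `x` are adjacent iff they
are adjacent in `G`, and `x` is adjacent to a vertex `w` iff `x` or `y` is adjacent
to `w` in `G`. (This matches the intended description when `x ≠ y` are non-adjacent.) -/
def identifyGraph {V : Type*} (G : SimpleGraph V) (x y : V) :
    SimpleGraph {v : V // v ≠ y} where
  Adj u w := u ≠ w ∧ (G.Adj u.1 w.1 ∨ (u.1 = x ∧ G.Adj y w.1) ∨ (w.1 = x ∧ G.Adj u.1 y))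
  symm := by
    constructor
    rintro u w ⟨hne, h⟩
    refine ⟨hne.symm, ?_⟩
    rcases h with h | ⟨hu, h⟩ | ⟨hw, h⟩
    · exact Or.inl h.symm
    · exact Or.inr (Or.inr ⟨hu, h.symm⟩)
    · exact Or.inr (Or.inl ⟨hw, h.symm⟩)
  loopless := ⟨fun u h => h.1 rfl⟩


lemma helly3 (A B C : Set ℝ)
    (hA : ∃ a b : ℝ, a ≤ b ∧ A = Set.Icc a b)
    (hB : ∃ a b : ℝ, a ≤ b ∧ B = Set.Icc a b)
    (hC : ∃ a b : ℝ, a ≤ b ∧ C = Set.Icc a b)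
    (hAB : (A ∩ B).Nonempty) (hAC : (A ∩ C).Nonempty) (hBC : (B ∩ C).Nonempty) :
    (A ∩ B ∩ C).Nonempty := by
  obtain ⟨a1, b1, h1, rfl⟩ := hA
  obtain ⟨a2, b2, h2, rfl⟩ := hB
  obtain ⟨a3, b3, h3, rfl⟩ := hC
  simp only [Set.Icc_inter_Icc, Set.nonempty_Icc, sup_le_iff, le_inf_iff] at *
  tauto

/-- Identifying two distinct non-adjacent vertices of a co-interval
graph yields a co-interval graph. -/
theorem stmt_4 {V : Type*} [Fintype V] (G : SimpleGraph V) (x y : V)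
    (hxy : x ≠ y) (hadj : ¬ G.Adj x y) (hG : IsCoIntervalGraph G) :
    IsCoIntervalGraph (identifyGraph G x y) := by
  classical
  obtain ⟨I, hIcc, hI⟩ := hG
  have hxyN : (I x ∩ I y).Nonempty := (hI x y hxy).mp ⟨hxy, hadj⟩
  refine ⟨fun u => if u.1 = x then I x ∩ I y else I u.1, ?_, ?_⟩
  · intro v
    beta_reduce
    by_cases hv : v.1 = x
    · rw [if_pos hv]
      obtain ⟨a1, b1, _, hx1⟩ := hIcc x
      obtain ⟨a2, b2, _, hy1⟩ := hIcc y
      refine ⟨a1 ⊔ a2, b1 ⊓ b2, ?_, by rw [hx1, hy1, Set.Icc_inter_Icc]⟩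
      rw [hx1, hy1, Set.Icc_inter_Icc, Set.nonempty_Icc] at hxyN
      exact hxyN
    · rw [if_neg hv]; exact hIcc v.1
  · rintro u w huw
    have huw1 : u.1 ≠ w.1 := fun h => huw (Subtype.ext h)
    have hC : ((identifyGraph G x y)ᶜ.Adj u w ↔
        ¬ G.Adj u.1 w.1 ∧ ¬ (u.1 = x ∧ G.Adj y w.1) ∧ ¬ (w.1 = x ∧ G.Adj u.1 y)) := by
      simp only [SimpleGraph.compl_adj, identifyGraph, ne_eq]
      tauto
    rw [hC]
    beta_reduce
    by_cases hu : u.1 = x <;> by_cases hw : w.1 = x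
    · exact absurd (Subtype.ext (hu.trans hw.symm)) huw
    · -- u = x, w ≠ x
      rw [if_pos hu, if_neg hw]
      have hxw : x ≠ w.1 := fun h => hw h.symm
      have h1 : (I x ∩ I w.1).Nonempty ↔ ¬ G.Adj x w.1 := by
        rw [← hI x w.1 hxw]; simp [hxw]
      have h2 : (I y ∩ I w.1).Nonempty ↔ ¬ G.Adj y w.1 := by
        rw [← hI y w.1 (Ne.symm w.2)]; simp [Ne.symm w.2]
      constructor
      · rintro ⟨hA, hB, -⟩
        exact helly3 _ _ _ (hIcc x) (hIcc y) (hIcc w.1) hxyN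
          (h1.mpr (hu ▸ hA)) (h2.mpr fun h => hB ⟨hu, h⟩)
      · rintro ⟨t, ⟨htx, hty⟩, htw⟩
        refine ⟨?_, fun hh => h2.mp ⟨t, hty, htw⟩ hh.2, fun hh => hw hh.1⟩
        rw [hu]; exact h1.mp ⟨t, htx, htw⟩
    · -- w = x, u ≠ x
      rw [if_neg hu, if_pos hw]
      have hux : u.1 ≠ x := hu
      have h1 : (I u.1 ∩ I x).Nonempty ↔ ¬ G.Adj u.1 x := by
        rw [← hI u.1 x hux]; simp [hux]
      have h2 : (I u.1 ∩ I y).Nonempty ↔ ¬ G.Adj u.1 y := by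
        rw [← hI u.1 y u.2]; simp [u.2]
      constructor
      · rintro ⟨hA, -, hB⟩
        obtain ⟨t, ⟨htu, htx⟩, hty⟩ :=
          helly3 _ _ _ (hIcc u.1) (hIcc x) (hIcc y) (h1.mpr (hw ▸ hA))
            (h2.mpr fun h => hB ⟨hw, h⟩) hxyN
        exact ⟨t, htu, htx, hty⟩
      · rintro ⟨t, htu, htx, hty⟩
        refine ⟨?_, fun hh => hu hh.1, fun hh => h2.mp ⟨t, htu, hty⟩ hh.2⟩
        rw [hw]; exact h1.mp ⟨t, htu, htx⟩
    · rw [if_neg hu, if_neg hw]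
      have h1 : (I u.1 ∩ I w.1).Nonempty ↔ ¬ G.Adj u.1 w.1 := by
        rw [← hI u.1 w.1 huw1]; simp [huw1]
      constructor
      · rintro ⟨hA, -, -⟩; exact h1.mpr hA
      · intro h
        exact ⟨h1.mp h, fun hh => hu hh.1, fun hh => hw hh.1⟩
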